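/- Let (Ω,d,μ) be a metric probability space satisfying Conditions 1' and 2. Then for every f ∈ Lip(Ω) ∩ L¹(Ω) and all 0 < a < b < 1: cap₁(a,b) · (f*_μ(a) − f*_μ(b)) ≤ ∫_{{x: f*_μ(b) < |f(x)| < f*_μ(a)}} |∇f(x)| dμ(x). -/

import Mathlib

open MeasureTheory Set Filter Topology
open scoped ENNReal NNReal

noncomputable section

/-- The distribution function `μ_f(t) = μ{x : |f x| > t}` (as a real number). -/
def distrib {α : Type*} [MeasurableSpace α] (μ : Measure α) (f : α → ℝ) (t : ℝ) : ℝ :=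
  (μ {x | t < |f x|}).toReal

/-- The decreasing rearrangement `f*_μ(s) = inf{t ≥ 0 : μ_f(t) ≤ s}`. -/
def rearr {α : Type*} [MeasurableSpace α] (μ : Measure α) (f : α → ℝ) (s : ℝ) : ℝ :=
  sInf {t : ℝ | 0 ≤ t ∧ distrib μ f t ≤ s}

/-- The maximal function `f**_μ(t) = (1/t) ∫₀ᵗ f*_μ(s) ds`. -/
def rearr2 {α : Type*} [MeasurableSpace α] (μ : Measure α) (f : α → ℝ) (t : ℝ) : ℝ :=
  (1 / t) * ∫ s in (0:ℝ)..t, rearr μ f s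

/-- The modulus of the gradient `|∇f|(x) = limsup_{d(x,y)→0} |f x - f y| / d(x,y)`. -/
def gradMod {Ω : Type*} [MetricSpace Ω] (f : Ω → ℝ) (x : Ω) : ℝ :=
  limsup (fun y => |f x - f y| / dist x y) (𝓝[≠] x)

/-- The Minkowski content `μ⁺(A) = liminf_{h→0⁺} (μ(A_h) - μ(A))/h`. -/
def minkContent {Ω : Type*} [MetricSpace Ω] [MeasurableSpace Ω] (μ : Measure Ω)
    (A : Set Ω) : ℝ :=
  liminf (fun h => ((μ (Metric.thickening h A)).toReal - (μ A).toReal) / h) (𝓝[>] 0)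

/-- The isoperimetric profile: the (pointwise maximal) function with
`μ⁺(A) ≥ I(μ(A))` for all Borel sets `A`. -/
def isoProfile {Ω : Type*} [MetricSpace Ω] [MeasurableSpace Ω] (μ : Measure Ω) (t : ℝ) : ℝ :=
  sInf (minkContent μ '' {A : Set Ω | MeasurableSet A ∧ (μ A).toReal = t})

/-- Condition 1': the isoperimetric profile is continuous, positive on `(0,1)`,
and vanishes at `0`. -/
def Condition1' {Ω : Type*} [MetricSpace Ω] [MeasurableSpace Ω] (μ : Measure Ω) : Prop :=
  ContinuousOn (isoProfile μ) (Icc 0 1) ∧ (∀ t ∈ Ioo (0:ℝ) 1, 0 < isoProfile μ t) ∧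
    isoProfile μ 0 = 0

/-- Condition 2: for Lipschitz `f` and every `c`, `|∇f| = 0` μ-a.e. on `{f = c}`. -/
def Condition2 {Ω : Type*} [MetricSpace Ω] [MeasurableSpace Ω] (μ : Measure Ω) : Prop :=
  ∀ f : Ω → ℝ, (∃ K, LipschitzWith K f) → ∀ c : ℝ,
    ∀ᵐ x ∂(μ.restrict {x | f x = c}), gradMod f x = 0

/-- The weights `w_q` built from the isoperimetric profile. -/
def wq (I : ℝ → ℝ) (q t : ℝ) : ℝ :=
  if q = 1 then sInf ((fun s => I s / s) '' Ioo 0 t)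
  else ((1 / t) * ∫ s in (0:ℝ)..t, (s / I s) ^ (q / (q - 1))) ^ ((1 - q) / q)

/-- Local absolute continuity on `(0,1)`. -/
def LocAbsContOn01 (g : ℝ → ℝ) : Prop :=
  ∀ a b : ℝ, 0 < a → a < b → b < 1 → ∀ ε > 0, ∃ δ > 0,
    ∀ (n : ℕ) (c d : Fin n → ℝ),
      (∀ k, a ≤ c k ∧ c k ≤ d k ∧ d k ≤ b) →
      (Pairwise fun j k => Ioo (c j) (d j) ∩ Ioo (c k) (d k) = ∅) →
      (∑ k, (d k - c k)) ≤ δ → (∑ k, |g (d k) - g (c k)|) ≤ ε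

/-- `f` is Lipschitz on balls. -/
def LipschitzOnBalls {Ω : Type*} [MetricSpace Ω] (f : Ω → ℝ) : Prop :=
  ∀ (x : Ω) (r : ℝ), ∃ K, LipschitzOnWith K f (Metric.ball x r)

/-- The `q`-capacity profile
`cap_q(a,b) = inf{‖|∇Φ|‖_{L^q} : Φ : Ω → [0,1] Lipschitz on balls, μ{Φ=1} ≥ a, μ{Φ=0} ≥ 1-b}`. -/
def capProfile {Ω : Type*} [MetricSpace Ω] [MeasurableSpace Ω] (μ : Measure Ω)
    (q a b : ℝ) : ℝ :=
  sInf {r : ℝ | ∃ Φ : Ω → ℝ, LipschitzOnBalls Φ ∧ (∀ x, Φ x ∈ Icc (0:ℝ) 1) ∧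
    a ≤ (μ {x | Φ x = 1}).toReal ∧ 1 - b ≤ (μ {x | Φ x = 0}).toReal ∧
    r = (∫ x, |gradMod Φ x| ^ q ∂μ) ^ (1 / q)}

section GradModBasic

variable {Ω : Type*} [MetricSpace Ω]

lemma quot_nonneg (f : Ω → ℝ) (x y : Ω) : 0 ≤ |f x - f y| / dist x y :=
  div_nonneg (abs_nonneg _) dist_nonneg

lemma quot_le {K : ℝ≥0} {f : Ω → ℝ} (hf : LipschitzWith K f) (x y : Ω) :
    |f x - f y| / dist x y ≤ K := by
  rcases eq_or_lt_of_le (dist_nonneg (x := x) (y := y)) with h | h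
  · rw [← h, div_zero]; exact K.coe_nonneg
  · rw [div_le_iff₀ h]
    have := hf.dist_le_mul x y
    rwa [Real.dist_eq] at this

lemma mem_ubSet {K : ℝ≥0} {f : Ω → ℝ} (hf : LipschitzWith K f) (x : Ω) :
    (K : ℝ) ∈ {a : ℝ | ∀ᶠ y in nhdsWithin x {x}ᶜ, |f x - f y| / dist x y ≤ a} := by
  rw [Set.mem_setOf_eq]
  exact Filter.Eventually.of_forall fun y => quot_le hf x y

lemma ubSet_nonneg {f : Ω → ℝ} {x : Ω} (hne : (nhdsWithin x {x}ᶜ).NeBot)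
    {a : ℝ} (ha : a ∈ {a : ℝ | ∀ᶠ y in nhdsWithin x {x}ᶜ, |f x - f y| / dist x y ≤ a}) :
    0 ≤ a := by
  haveI := hne
  rw [Set.mem_setOf_eq] at ha
  obtain ⟨y, hy⟩ := ha.exists
  exact le_trans (quot_nonneg f x y) hy

lemma gradMod_eq (f : Ω → ℝ) (x : Ω) :
    gradMod f x = sInf {a : ℝ | ∀ᶠ y in nhdsWithin x {x}ᶜ, |f x - f y| / dist x y ≤ a} := by
  rw [gradMod, Filter.limsup_eq]

lemma gradMod_nonneg {K : ℝ≥0} {f : Ω → ℝ} (hf : LipschitzWith K f) {x : Ω}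
    (hne : (nhdsWithin x {x}ᶜ).NeBot) : 0 ≤ gradMod f x := by
  rw [gradMod_eq]
  exact le_csInf ⟨K, mem_ubSet hf x⟩ fun a ha => ubSet_nonneg hne ha

lemma gradMod_le_lip {K : ℝ≥0} {f : Ω → ℝ} (hf : LipschitzWith K f) {x : Ω}
    (hne : (nhdsWithin x {x}ᶜ).NeBot) : gradMod f x ≤ K := by
  rw [gradMod_eq]
  exact csInf_le ⟨0, fun a ha => ubSet_nonneg hne ha⟩ (mem_ubSet hf x)

lemma gradMod_eventually_const {Φ : Ω → ℝ} {x : Ω} (hne : (nhdsWithin x {x}ᶜ).NeBot)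
    (h : ∀ᶠ y in nhds x, Φ y = Φ x) : gradMod Φ x = 0 := by
  haveI := hne
  have h' : (fun y => |Φ x - Φ y| / dist x y) =ᶠ[nhdsWithin x {x}ᶜ] fun _ => (0 : ℝ) := by
    filter_upwards [nhdsWithin_le_nhds (s := {x}ᶜ) h] with y hy
    simp [hy]
  rw [gradMod, Filter.limsup_congr h', Filter.limsup_const]

lemma gradMod_le_of_forall {Φ f : Ω → ℝ} {K : ℝ≥0} (hf : LipschitzWith K f) {x : Ω}
    (hne : (nhdsWithin x {x}ᶜ).NeBot) {c : ℝ} (hc : 0 ≤ c)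
    (h : ∀ y, |Φ x - Φ y| ≤ c * |f x - f y|) : gradMod Φ x ≤ c * gradMod f x := by
  rw [gradMod_eq, gradMod_eq]
  set A := {a : ℝ | ∀ᶠ y in nhdsWithin x {x}ᶜ, |Φ x - Φ y| / dist x y ≤ a} with hA
  set B := {a : ℝ | ∀ᶠ y in nhdsWithin x {x}ᶜ, |f x - f y| / dist x y ≤ a} with hB
  have hBne : B.Nonempty := ⟨K, mem_ubSet hf x⟩
  have hAbb : BddBelow A := ⟨0, fun a ha => ubSet_nonneg hne ha⟩
  have key : ∀ b ∈ B, sInf A ≤ c * b := by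
    intro b hb
    refine csInf_le hAbb ?_
    filter_upwards [hb, self_mem_nhdsWithin] with y hy hy'
    have hd : 0 < dist x y := by
      rw [dist_pos]; exact fun hxy => hy' (hxy ▸ rfl)
    rw [div_le_iff₀ hd]
    calc |Φ x - Φ y| ≤ c * |f x - f y| := h y
      _ = c * (|f x - f y| / dist x y * dist x y) := by field_simp
      _ ≤ c * (b * dist x y) := by
          have := mul_le_mul_of_nonneg_right hy hd.le
          nlinarith
      _ = c * b * dist x y := by ring
  rcases eq_or_lt_of_le hc with rfl | hc'
  · obtain ⟨b, hb⟩ := hBne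
    simpa using key b hb
  · have h1 : sInf A / c ≤ sInf B := by
      refine le_csInf hBne fun b hb => ?_
      rw [div_le_iff₀ hc']
      calc sInf A ≤ c * b := key b hb
        _ = b * c := mul_comm _ _
    calc sInf A = sInf A / c * c := by field_simp
      _ ≤ sInf B * c := mul_le_mul_of_nonneg_right h1 hc
      _ = c * sInf B := mul_comm _ _

end GradModBasic
section Space

lemma nontrivial_of_prob {Ω : Type*} [MetricSpace Ω] [MeasurableSpace Ω]
    (μ : Measure Ω) [IsProbabilityMeasure μ] [NullSingletonClass μ] : Nontrivial Ω := by
  by_contra h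
  rw [not_nontrivial_iff_subsingleton] at h
  have hne : Nonempty Ω := by
    by_contra h'
    have : μ Set.univ = 0 := by
      rw [Set.univ_eq_empty_iff.2 (not_nonempty_iff.1 h')]
      exact measure_empty
    simp [measure_univ] at this
  obtain ⟨x⟩ := hne
  have h1 : (Set.univ : Set Ω) ⊆ {x} := fun y _ => Subsingleton.elim y x
  have h2 : μ Set.univ ≤ μ {x} := measure_mono h1
  rw [measure_univ, measure_singleton] at h2
  simp at h2

lemma nebot_punctured {Ω : Type*} [MetricSpace Ω] [ConnectedSpace Ω] [Nontrivial Ω]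
    (x : Ω) : (nhdsWithin x {x}ᶜ).NeBot := by
  rw [Filter.neBot_iff]
  intro h
  have hop : IsOpen ({x} : Set Ω) := (isOpen_singleton_iff_punctured_nhds x).2 h
  rcases isClopen_iff.1 ⟨isClosed_singleton, hop⟩ with h1 | h2
  · exact (Set.singleton_nonempty x).ne_empty h1
  · obtain ⟨y, hy⟩ := exists_ne x
    exact hy (Set.mem_singleton_iff.1 (h2 ▸ Set.mem_univ y))

end Space

section Meas

variable {Ω : Type*} [MetricSpace Ω] [TopologicalSpace.SeparableSpace Ω]
  [MeasurableSpace Ω] [BorelSpace Ω] [Nonempty Ω]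

lemma gradMod_measurable (hni : ∀ x : Ω, (nhdsWithin x {x}ᶜ).NeBot)
    {K : ℝ≥0} {f : Ω → ℝ} (hf : LipschitzWith K f) : Measurable (gradMod f) := by
  obtain ⟨D, hDc, hDd⟩ := TopologicalSpace.exists_countable_dense Ω
  have hDne : D.Nonempty := hDd.nonempty
  obtain ⟨u, hu⟩ := Set.Countable.exists_eq_range hDc hDne
  set g : ℕ → ℕ → Ω → ℝ := fun n k x =>
    if 0 < dist x (u k) ∧ dist x (u k) < 1 / (n + 1) then |f x - f (u k)| / dist x (u k) else 0
    with hg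
  have hgm : ∀ n k, Measurable (g n k) := by
    intro n k
    apply Measurable.ite
    · exact MeasurableSet.inter
        (measurableSet_lt measurable_const (continuous_id.dist continuous_const).measurable)
        (measurableSet_lt (continuous_id.dist continuous_const).measurable measurable_const)
    · exact ((hf.continuous.sub continuous_const).abs.measurable).div
        (continuous_id.dist continuous_const).measurable
    · exact measurable_const
  have hgnn : ∀ n k x, 0 ≤ g n k x := by
    intro n k x
    rw [hg]
    dsimp only
    split
    · exact quot_nonneg f x (u k)
    · exact le_refl 0
  have hgle : ∀ n k x, g n k x ≤ K := by
    intro n k x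
    rw [hg]
    dsimp only
    split
    · exact quot_le hf x (u k)
    · exact K.coe_nonneg
  have hF : Measurable (fun x => ⨅ n : ℕ, ⨆ k : ℕ, g n k x) :=
    Measurable.iInf fun n => Measurable.iSup fun k => hgm n k
  have heq : gradMod f = fun x => ⨅ n : ℕ, ⨆ k : ℕ, g n k x := by
    funext x
    haveI := hni x
    have hAbb : BddBelow {a : ℝ | ∀ᶠ y in nhdsWithin x {x}ᶜ, |f x - f y| / dist x y ≤ a} :=
      ⟨0, fun a ha => ubSet_nonneg (hni x) ha⟩
    have hbdd : ∀ n, BddAbove (Set.range fun k => g n k x) := fun n =>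
      ⟨K, by rintro _ ⟨k, rfl⟩; exact hgle n k x⟩
    have hSnn : ∀ n, 0 ≤ ⨆ k, g n k x := fun n =>
      le_trans (hgnn n 0 x) (le_ciSup (hbdd n) 0)
    have claim1 : ∀ n : ℕ,
        (⨆ k, g n k x) ∈ {a : ℝ | ∀ᶠ y in nhdsWithin x {x}ᶜ, |f x - f y| / dist x y ≤ a} := by
      intro n
      rw [Set.mem_setOf_eq, eventually_nhdsWithin_iff, Metric.eventually_nhds_iff]
      refine ⟨1 / (n + 1), by positivity, fun y hy hy' => ?_⟩
      have hyx : y ≠ x := hy'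
      have hdxy : 0 < dist x y := dist_pos.2 fun h => hyx h.symm
      refine le_of_forall_pos_le_add ?_
      intro ε hε
      set U : Set Ω := {z | 0 < dist x z ∧ dist x z < 1 / (n + 1)} with hU
      have hUopen : IsOpen U :=
        IsOpen.inter (isOpen_lt continuous_const (continuous_const.dist continuous_id))
          (isOpen_lt (continuous_const.dist continuous_id) continuous_const)
      have hqcont : ContinuousOn (fun z => |f x - f z| / dist x z) U :=
        ContinuousOn.div ((continuous_const.sub hf.continuous).abs.continuousOn)
          ((continuous_const.dist continuous_id).continuousOn) fun z hz => ne_of_gt hz.1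
      set q : ℝ := |f x - f y| / dist x y with hqdef
      set V := U ∩ (fun z => |f x - f z| / dist x z) ⁻¹' (Set.Ioo (q - ε) (q + ε)) with hV
      have hVopen : IsOpen V := hqcont.isOpen_inter_preimage hUopen isOpen_Ioo
      have hyV : y ∈ V := by
        refine ⟨⟨hdxy, ?_⟩, ?_⟩
        · rw [dist_comm]; exact hy
        · simp only [Set.mem_preimage, Set.mem_Ioo, ← hqdef]
          constructor <;> linarith
      obtain ⟨d, hdD, hdV⟩ := hDd.exists_mem_open hVopen ⟨y, hyV⟩
      have : d ∈ Set.range u := hu ▸ hdD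
      obtain ⟨k, rfl⟩ := this
      have hgk : g n k x = |f x - f (u k)| / dist x (u k) := if_pos ⟨hdV.1.1, hdV.1.2⟩
      have h2 := le_ciSup (hbdd n) k
      have h3 : q - ε < |f x - f (u k)| / dist x (u k) := hdV.2.1
      linarith [hgk ▸ h2]
    have claim2 : ∀ a ∈ {a : ℝ | ∀ᶠ y in nhdsWithin x {x}ᶜ, |f x - f y| / dist x y ≤ a},
        (⨅ n : ℕ, ⨆ k : ℕ, g n k x) ≤ a := by
      intro a ha
      have ha0 : 0 ≤ a := ubSet_nonneg (hni x) ha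
      rw [Set.mem_setOf_eq, eventually_nhdsWithin_iff, Metric.eventually_nhds_iff] at ha
      obtain ⟨ε, hε, hball⟩ := ha
      obtain ⟨n, hn⟩ := exists_nat_one_div_lt (ε := ε) hε
      have hSn : (⨆ k, g n k x) ≤ a := by
        refine ciSup_le fun k => ?_
        by_cases hcond : 0 < dist x (u k) ∧ dist x (u k) < 1 / (n + 1)
        · have hgk : g n k x = |f x - f (u k)| / dist x (u k) := if_pos hcond
          rw [hgk]
          refine hball ?_ ?_
          · rw [dist_comm]; exact lt_trans hcond.2 hn
          · exact fun h => absurd hcond.1 (by rw [h]; simp)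
        · have hgk : g n k x = 0 := if_neg hcond
          rw [hgk]; exact ha0
      exact le_trans (ciInf_le ⟨0, by rintro s ⟨m, rfl⟩; exact hSnn m⟩ n) hSn
    rw [gradMod_eq]
    apply le_antisymm
    · exact le_ciInf fun n => csInf_le hAbb (claim1 n)
    · exact le_csInf ⟨K, mem_ubSet hf x⟩ claim2
  rw [heq]
  exact hF

end Meas
section Rearr

variable {Ω : Type*} [MetricSpace Ω] [MeasurableSpace Ω] [BorelSpace Ω]
  (μ : Measure Ω) [IsProbabilityMeasure μ] {f : Ω → ℝ}

lemma rearr_set_nonempty (hfm : Measurable f) {s : ℝ} (hs : 0 < s) :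
    Set.Nonempty {t : ℝ | 0 ≤ t ∧ distrib μ f t ≤ s} := by
  have hmeas : ∀ n : ℕ, MeasurableSet {x : Ω | (n : ℝ) < |f x|} := fun n =>
    measurableSet_lt measurable_const hfm.abs
  have hanti : Antitone fun n : ℕ => {x : Ω | (n : ℝ) < |f x|} := by
    intro n m hnm x hx
    simp only [Set.mem_setOf_eq] at hx ⊢
    have : (n : ℝ) ≤ m := Nat.cast_le.2 hnm
    linarith
  have hiInter : ⋂ n : ℕ, {x : Ω | (n : ℝ) < |f x|} = ∅ := by
    ext x
    simp only [Set.mem_iInter, Set.mem_setOf_eq, Set.mem_empty_iff_false, iff_false, not_forall,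
      not_lt]
    obtain ⟨n, hn⟩ := exists_nat_gt |f x|
    exact ⟨n, hn.le⟩
  have htend := tendsto_measure_iInter_atTop (μ := μ)
    (fun n => (hmeas n).nullMeasurableSet) hanti ⟨0, measure_ne_top μ _⟩
  rw [hiInter, measure_empty] at htend
  have hev := htend.eventually_lt_const (show (0:ℝ≥0∞) < ENNReal.ofReal s by
    simpa using hs)
  obtain ⟨n, hn⟩ := hev.exists
  refine ⟨n, Nat.cast_nonneg n, ?_⟩
  have := ENNReal.toReal_mono ENNReal.ofReal_ne_top hn.le
  rwa [ENNReal.toReal_ofReal hs.le] at this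

lemma rearr_nonneg (hfm : Measurable f) {s : ℝ} (hs : 0 < s) : 0 ≤ rearr μ f s :=
  le_csInf (rearr_set_nonempty μ hfm hs) fun t ht => ht.1

lemma rearr_antitone (hfm : Measurable f) {s s' : ℝ} (hs : 0 < s) (hss' : s ≤ s') :
    rearr μ f s' ≤ rearr μ f s := by
  refine csInf_le_csInf ⟨0, fun t ht => ht.1⟩ (rearr_set_nonempty μ hfm hs) ?_
  intro t ht
  exact ⟨ht.1, ht.2.trans hss'⟩

lemma distrib_rearr_le (hfm : Measurable f) {s : ℝ} (hs : 0 < s) :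
    distrib μ f (rearr μ f s) ≤ s := by
  set t2 := rearr μ f s with ht2
  have hU : {x : Ω | t2 < |f x|} = ⋃ n : ℕ, {x : Ω | t2 + 1 / (n + 1) < |f x|} := by
    ext x
    simp only [Set.mem_setOf_eq, Set.mem_iUnion]
    constructor
    · intro h
      obtain ⟨n, hn⟩ := exists_nat_one_div_lt (show (0:ℝ) < |f x| - t2 by linarith)
      exact ⟨n, by push_cast at hn ⊢; linarith⟩
    · rintro ⟨n, hn⟩
      have : (0:ℝ) < 1 / (n + 1) := by positivity
      linarith
  have hmono : Monotone fun n : ℕ => {x : Ω | t2 + 1 / (n + 1) < |f x|} := by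
    intro n m hnm x hx
    simp only [Set.mem_setOf_eq] at hx ⊢
    have h1 : (1:ℝ) / (m + 1) ≤ 1 / (n + 1) := by
      apply one_div_le_one_div_of_le (by positivity)
      have : (n:ℝ) ≤ m := Nat.cast_le.2 hnm
      linarith
    linarith
  have htend := tendsto_measure_iUnion_atTop (μ := μ) hmono
  rw [← hU] at htend
  have hbound : ∀ n : ℕ, μ {x : Ω | t2 + 1 / (n + 1) < |f x|} ≤ ENNReal.ofReal s := by
    intro n
    have hlt : sInf {t : ℝ | 0 ≤ t ∧ distrib μ f t ≤ s} < t2 + 1 / (n + 1) := by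
      rw [← rearr, ← ht2]
      have : (0:ℝ) < 1 / (n + 1) := by positivity
      linarith
    obtain ⟨t, htmem, htlt⟩ := exists_lt_of_csInf_lt (rearr_set_nonempty μ hfm hs) hlt
    have hsub : {x : Ω | t2 + 1 / (n + 1) < |f x|} ⊆ {x : Ω | t < |f x|} := by
      intro x hx
      simp only [Set.mem_setOf_eq] at hx ⊢
      linarith
    calc μ {x : Ω | t2 + 1 / (n + 1) < |f x|} ≤ μ {x : Ω | t < |f x|} := measure_mono hsub
      _ ≤ ENNReal.ofReal s :=
        (ENNReal.le_ofReal_iff_toReal_le (measure_ne_top μ _) hs.le).2 htmem.2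
  have hle : μ {x : Ω | t2 < |f x|} ≤ ENNReal.ofReal s :=
    le_of_tendsto' htend fun n => hbound n
  have := ENNReal.toReal_mono ENNReal.ofReal_ne_top hle
  rwa [ENNReal.toReal_ofReal hs.le] at this

lemma measure_rearr_ge (hfm : Measurable f) {s : ℝ} (hs : 0 < s) (hs1 : s ≤ 1) :
    s ≤ (μ {x : Ω | rearr μ f s ≤ |f x|}).toReal := by
  set t1 := rearr μ f s with ht1
  have ht1nn : 0 ≤ t1 := rearr_nonneg μ hfm hs
  rcases eq_or_lt_of_le ht1nn with h0 | h0
  · have : {x : Ω | t1 ≤ |f x|} = Set.univ := by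
      ext x; simp only [Set.mem_setOf_eq, Set.mem_univ, iff_true, ← h0]
      exact abs_nonneg _
    rw [this, measure_univ]
    simpa using hs1
  · have hlt : ∀ t : ℝ, 0 ≤ t → t < t1 → s < distrib μ f t := by
      intro t ht0 htlt
      by_contra hcon
      push_neg at hcon
      have : t1 ≤ t := csInf_le ⟨0, fun r hr => hr.1⟩ ⟨ht0, hcon⟩
      linarith
    set C : ℕ → Set Ω := fun n => {x : Ω | t1 - t1 / (n + 1) < |f x|} with hC
    have hCmeas : ∀ n, MeasurableSet (C n) := fun n =>
      measurableSet_lt measurable_const hfm.abs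
    have hCanti : Antitone C := by
      intro n m hnm x hx
      simp only [hC, Set.mem_setOf_eq] at hx ⊢
      have h1 : t1 / (m + 1) ≤ t1 / (n + 1) := by
        apply div_le_div_of_nonneg_left ht1nn (by positivity)
        have : (n:ℝ) ≤ m := Nat.cast_le.2 hnm
        linarith
      linarith
    have hCiInter : ⋂ n, C n = {x : Ω | t1 ≤ |f x|} := by
      ext x
      simp only [Set.mem_iInter, hC, Set.mem_setOf_eq]
      constructor
      · intro h
        by_contra hcon
        push_neg at hcon
        obtain ⟨n, hn⟩ := exists_nat_one_div_lt
          (show (0:ℝ) < (t1 - |f x|) / t1 from div_pos (by linarith) h0)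
        have h2 : t1 / (n + 1) < t1 - |f x| := by
          have hmul := mul_lt_mul_of_pos_left hn h0
          have e1 : t1 * (1 / ((n:ℝ) + 1)) = t1 / ((n:ℝ) + 1) := by ring
          have e2 : t1 * ((t1 - |f x|) / t1) = t1 - |f x| := by field_simp
          rw [e1, e2] at hmul
          exact hmul
        have := h n
        push_cast at this h2 ⊢
        linarith
      · intro h n
        have h1 : 0 < t1 / (n + 1) := by positivity
        linarith
    have htend := tendsto_measure_iInter_atTop (μ := μ)
      (fun n => (hCmeas n).nullMeasurableSet) hCanti ⟨0, measure_ne_top μ _⟩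
    rw [hCiInter] at htend
    have hbound : ∀ n : ℕ, ENNReal.ofReal s ≤ μ (C n) := by
      intro n
      have h1 : 0 < t1 / (n + 1) := by positivity
      have h2 : t1 / ((n:ℝ) + 1) ≤ t1 := by
        rw [div_le_iff₀ (by positivity)]
        nlinarith
      have h3 := hlt (t1 - t1 / (n + 1)) (by linarith) (by linarith)
      exact ENNReal.ofReal_le_of_le_toReal h3.le
    have hge : ENNReal.ofReal s ≤ μ {x : Ω | t1 ≤ |f x|} :=
      ge_of_tendsto' htend fun n => hbound n
    have := ENNReal.toReal_mono (measure_ne_top μ _) hge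
    rwa [ENNReal.toReal_ofReal hs.le] at this

end Rearr
/-- Under Conditions 1' and 2, for `f ∈ Lip(Ω) ∩ L¹(Ω)` and `0 < a < b < 1`,
`cap₁(a,b) · (f*_μ(a) - f*_μ(b)) ≤ ∫_{{f*_μ(b) < |f| < f*_μ(a)}} |∇f| dμ`. -/
theorem capacity_oscillation_estimate
    {Ω : Type*} [MetricSpace Ω] [ConnectedSpace Ω] [TopologicalSpace.SeparableSpace Ω]
    [MeasurableSpace Ω] [BorelSpace Ω] (μ : Measure Ω) [IsProbabilityMeasure μ] [NullSingletonClass μ]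
    (h1 : Condition1' μ) (h2 : Condition2 μ)
    (f : Ω → ℝ) (hfLip : ∃ K, LipschitzWith K f) (hfL1 : Integrable f μ)
    (a b : ℝ) (ha : 0 < a) (hab : a < b) (hb : b < 1) :
    capProfile μ 1 a b * (rearr μ f a - rearr μ f b) ≤
      ∫ x in {x | rearr μ f b < |f x| ∧ |f x| < rearr μ f a}, gradMod f x ∂μ := by
  obtain ⟨K, hK⟩ := hfLip
  haveI hnt : Nontrivial Ω := nontrivial_of_prob μ
  haveI : Nonempty Ω := inferInstance
  have hni : ∀ x : Ω, (nhdsWithin x {x}ᶜ).NeBot := fun x => nebot_punctured x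
  have hfm : Measurable f := hK.continuous.measurable
  set t1 := rearr μ f a with ht1def
  set t2 := rearr μ f b with ht2def
  have ht2nn : 0 ≤ t2 := rearr_nonneg μ hfm (lt_trans ha hab)
  have ht1nn : 0 ≤ t1 := rearr_nonneg μ hfm ha
  have ht21 : t2 ≤ t1 := rearr_antitone μ hfm ha hab.le
  set S : Set Ω := {x | t2 < |f x| ∧ |f x| < t1} with hSdef
  have hSmeas : MeasurableSet S :=
    (measurableSet_lt measurable_const hfm.abs).inter
      (measurableSet_lt hfm.abs measurable_const)
  have hgradnn : ∀ x, 0 ≤ gradMod f x := fun x => gradMod_nonneg hK (hni x)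
  have hRHSnn : 0 ≤ ∫ x in S, gradMod f x ∂μ := integral_nonneg hgradnn
  rcases eq_or_lt_of_le ht21 with heq | hlt
  · have hzero : t1 - t2 = 0 := by rw [heq]; ring
    rw [hzero, mul_zero]
    exact hRHSnn
  -- main case : t2 < t1
  set c : ℝ := (t1 - t2)⁻¹ with hcdef
  have hc0 : 0 < c := inv_pos.2 (by linarith)
  set Φ : Ω → ℝ := fun x => max 0 (min 1 ((|f x| - t2) * c)) with hΦdef
  have hΦdiff : ∀ x y, |Φ x - Φ y| ≤ c * |f x - f y| := by
    intro x y
    set u : ℝ := min 1 ((|f x| - t2) * c) with hu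
    set v : ℝ := min 1 ((|f y| - t2) * c) with hv
    have e1 : Φ x = max u 0 := by rw [hΦdef]; dsimp only; rw [max_comm, hu]
    have e2 : Φ y = max v 0 := by rw [hΦdef]; dsimp only; rw [max_comm, hv]
    have h1 : |max u 0 - max v 0| ≤ |u - v| := abs_max_sub_max_le_abs u v 0
    have h2 : |u - v| ≤ |(|f x| - t2) * c - (|f y| - t2) * c| := by
      have := abs_min_sub_min_le_max (1:ℝ) ((|f x| - t2) * c) 1 ((|f y| - t2) * c)
      simpa [hu, hv] using this
    have h3 : |(|f x| - t2) * c - (|f y| - t2) * c| = |(|f x| - |f y|)| * c := by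
      rw [show (|f x| - t2) * c - (|f y| - t2) * c = (|f x| - |f y|) * c by ring,
        abs_mul, abs_of_nonneg hc0.le]
    have h4 : |(|f x| - |f y|)| ≤ |f x - f y| := abs_abs_sub_abs_le_abs_sub _ _
    calc |Φ x - Φ y| = |max u 0 - max v 0| := by rw [e1, e2]
      _ ≤ |u - v| := h1
      _ ≤ |(|f x| - t2) * c - (|f y| - t2) * c| := h2
      _ = |(|f x| - |f y|)| * c := h3
      _ ≤ |f x - f y| * c := mul_le_mul_of_nonneg_right h4 hc0.le
      _ = c * |f x - f y| := mul_comm _ _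
  have hcoe : ((K * Real.toNNReal c : ℝ≥0) : ℝ) = (K : ℝ) * c := by
    push_cast
    rw [Real.coe_toNNReal _ hc0.le]
  have hΦlip : LipschitzWith (K * Real.toNNReal c) Φ := by
    apply LipschitzWith.of_dist_le_mul
    intro x y
    rw [Real.dist_eq, hcoe]
    have hd1 := hΦdiff x y
    have hd2 : |f x - f y| ≤ (K : ℝ) * dist x y := by
      have := hK.dist_le_mul x y
      rwa [Real.dist_eq] at this
    nlinarith [hc0.le]
  have hΦlipOB : LipschitzOnBalls Φ := fun x r => ⟨_, hΦlip.lipschitzOnWith⟩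
  have hΦ01 : ∀ x, Φ x ∈ Set.Icc (0:ℝ) 1 := fun x =>
    ⟨le_max_left _ _, max_le zero_le_one (min_le_left _ _)⟩
  have hΦ1 : {x : Ω | t1 ≤ |f x|} ⊆ {x : Ω | Φ x = 1} := by
    intro x hx
    simp only [Set.mem_setOf_eq] at hx ⊢
    have h1 : (1:ℝ) ≤ (|f x| - t2) * c := by
      rw [hcdef, ← div_eq_mul_inv, le_div_iff₀ (by linarith)]
      linarith
    rw [hΦdef]
    dsimp only
    rw [min_eq_left h1, max_eq_right zero_le_one]
  have hΦ0 : {x : Ω | |f x| ≤ t2} ⊆ {x : Ω | Φ x = 0} := by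
    intro x hx
    simp only [Set.mem_setOf_eq] at hx ⊢
    have h1 : (|f x| - t2) * c ≤ 0 := mul_nonpos_of_nonpos_of_nonneg (by linarith) hc0.le
    rw [hΦdef]
    dsimp only
    rw [min_eq_right (h1.trans zero_le_one), max_eq_left h1]
  have hμ1 : a ≤ (μ {x | Φ x = 1}).toReal := by
    refine le_trans (measure_rearr_ge μ hfm ha (by linarith)) ?_
    exact ENNReal.toReal_mono (measure_ne_top μ _) (measure_mono hΦ1)
  have hμ0 : 1 - b ≤ (μ {x | Φ x = 0}).toReal := by
    have hd2 : distrib μ f t2 ≤ b := distrib_rearr_le μ hfm (lt_trans ha hab)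
    have hcompl : {x : Ω | |f x| ≤ t2} = {x : Ω | t2 < |f x|}ᶜ := by
      ext x; simp [not_lt]
    have hmeas2 : MeasurableSet {x : Ω | t2 < |f x|} :=
      measurableSet_lt measurable_const hfm.abs
    have h1 : (μ {x : Ω | |f x| ≤ t2}).toReal = 1 - (μ {x : Ω | t2 < |f x|}).toReal := by
      rw [hcompl, prob_compl_eq_one_sub hmeas2]
      rw [ENNReal.toReal_sub_of_le prob_le_one ENNReal.one_ne_top]
      simp
    have h2 : 1 - b ≤ (μ {x : Ω | |f x| ≤ t2}).toReal := by
      rw [h1]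
      have : (μ {x : Ω | t2 < |f x|}).toReal ≤ b := hd2
      linarith
    exact le_trans h2 (ENNReal.toReal_mono (measure_ne_top μ _) (measure_mono hΦ0))
  have hΦgradnn : ∀ x, 0 ≤ gradMod Φ x := fun x => gradMod_nonneg hΦlip (hni x)
  have hgmeas : Measurable (gradMod f) := gradMod_measurable hni hK
  -- condition 2 consequences
  have hce : ∀ c' : ℝ, ∀ᵐ x ∂μ, f x = c' → gradMod f x = 0 := by
    intro c'
    have hm : MeasurableSet {x : Ω | f x = c'} := hfm (measurableSet_singleton c')
    exact (ae_restrict_iff' hm).1 (h2 f ⟨K, hK⟩ c')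
  have h2' : ∀ᵐ x ∂μ, (|f x| = t1 ∨ |f x| = t2) → gradMod f x = 0 := by
    filter_upwards [hce t1, hce (-t1), hce t2, hce (-t2)] with x p1 p2 p3 p4 habs
    rcases habs with h | h
    · rcases (abs_eq ht1nn).1 h with h' | h'
      · exact p1 h'
      · exact p2 h'
    · rcases (abs_eq ht2nn).1 h with h' | h'
      · exact p3 h'
      · exact p4 h'
  -- key pointwise a.e. bound
  have key_ae : ∀ᵐ x ∂μ, gradMod Φ x ≤ Set.indicator S (gradMod f) x * c := by
    filter_upwards [h2'] with x hx
    have hindnn : 0 ≤ Set.indicator S (gradMod f) x * c :=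
      mul_nonneg (Set.indicator_nonneg (fun y _ => hgradnn y) x) hc0.le
    by_cases hcase1 : t1 < |f x|
    · have hopen : IsOpen {y : Ω | t1 < |f y|} := isOpen_lt continuous_const hK.continuous.abs
      have hev : ∀ᶠ y in nhds x, Φ y = Φ x := by
        filter_upwards [hopen.mem_nhds hcase1] with y hy
        have h1 : Φ y = 1 := hΦ1 (le_of_lt hy)
        have h2 : Φ x = 1 := hΦ1 (le_of_lt hcase1)
        rw [h1, h2]
      rw [gradMod_eventually_const (hni x) hev]
      exact hindnn
    by_cases hcase2 : |f x| < t2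
    · have hopen : IsOpen {y : Ω | |f y| < t2} := isOpen_lt hK.continuous.abs continuous_const
      have hev : ∀ᶠ y in nhds x, Φ y = Φ x := by
        filter_upwards [hopen.mem_nhds hcase2] with y hy
        have h1 : Φ y = 0 := hΦ0 (le_of_lt hy)
        have h2 : Φ x = 0 := hΦ0 (le_of_lt hcase2)
        rw [h1, h2]
      rw [gradMod_eventually_const (hni x) hev]
      exact hindnn
    by_cases hcase3 : |f x| = t1 ∨ |f x| = t2
    · have h0 := hx hcase3
      have hle := gradMod_le_of_forall hK (hni x) hc0.le (hΦdiff x)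
      rw [h0, mul_zero] at hle
      exact hle.trans hindnn
    · push_neg at hcase3
      have hxS : x ∈ S := by
        constructor
        · exact lt_of_le_of_ne (not_lt.1 hcase2) (Ne.symm hcase3.2)
        · exact lt_of_le_of_ne (not_lt.1 hcase1) hcase3.1
      rw [Set.indicator_of_mem hxS]
      have hle := gradMod_le_of_forall hK (hni x) hc0.le (hΦdiff x)
      calc gradMod Φ x ≤ c * gradMod f x := hle
        _ = gradMod f x * c := mul_comm _ _
  -- integrability of the majorant
  have hGint : Integrable (fun x => Set.indicator S (gradMod f) x * c) μ := by
    refine ⟨((hgmeas.indicator hSmeas).mul_const c).aestronglyMeasurable, ?_⟩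
    apply HasFiniteIntegral.of_bounded (C := (K : ℝ) * c)
    refine Filter.Eventually.of_forall fun x => ?_
    rw [Real.norm_eq_abs, abs_mul, abs_of_nonneg hc0.le]
    have h1 : |Set.indicator S (gradMod f) x| ≤ (K : ℝ) := by
      by_cases hmem : x ∈ S
      · rw [Set.indicator_of_mem hmem, abs_of_nonneg (hgradnn x)]
        exact gradMod_le_lip hK (hni x)
      · rw [Set.indicator_of_notMem hmem]
        simpa using K.coe_nonneg
    exact mul_le_mul_of_nonneg_right h1 hc0.le
  have hmain : ∫ x, gradMod Φ x ∂μ ≤ (∫ x in S, gradMod f x ∂μ) * c := by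
    calc ∫ x, gradMod Φ x ∂μ ≤ ∫ x, Set.indicator S (gradMod f) x * c ∂μ :=
        integral_mono_of_nonneg (Filter.Eventually.of_forall hΦgradnn) hGint key_ae
      _ = (∫ x, Set.indicator S (gradMod f) x ∂μ) * c := integral_mul_const _ _
      _ = (∫ x in S, gradMod f x ∂μ) * c := by rw [integral_indicator hSmeas]
  have hcap : capProfile μ 1 a b ≤ ∫ x, gradMod Φ x ∂μ := by
    rw [capProfile]
    apply csInf_le
    · refine ⟨0, ?_⟩
      rintro r ⟨Ψ, -, -, -, -, rfl⟩
      exact Real.rpow_nonneg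
        (integral_nonneg fun x => Real.rpow_nonneg (abs_nonneg _) _) _
    · refine ⟨Φ, hΦlipOB, hΦ01, hμ1, hμ0, ?_⟩
      have hone : (1:ℝ) / 1 = 1 := by norm_num
      rw [hone, Real.rpow_one]
      congr 1
      funext x
      rw [Real.rpow_one, abs_of_nonneg (hΦgradnn x)]
  have hfinal := mul_le_mul_of_nonneg_right (hcap.trans hmain)
    (show (0:ℝ) ≤ t1 - t2 by linarith)
  have hsimp : (∫ x in S, gradMod f x ∂μ) * c * (t1 - t2) = ∫ x in S, gradMod f x ∂μ := by
    rw [hcdef, mul_assoc, inv_mul_cancel₀ (show t1 - t2 ≠ 0 by linarith), mul_one]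
  rw [hsimp] at hfinal
  exact hfinal
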